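/- In the Hermitian dilation setup, it holds that inf over Q_0^d ∈ ℝ^{(d₁+d₂)×2r} with ‖Q_0^d‖_w = 1 of ‖Q_0^dL̄_1^d − L̄_2^dQ_0^d‖_w is at least σ_r − 4rμ_0(τ_0 + rκ_0) − ε_0. Moreover, if σ_r > 2κ_0·r·√μ_0, then L̄_1^d is an invertible 2r×2r matrix. -/

import Mathlib

open Matrix BigOperators

/-- Entrywise max norm: largest absolute value of an entry. -/
noncomputable def matMaxNorm {m n : Type*} [Fintype m] [Fintype n] (M : Matrix m n ℝ) : ℝ :=
  ⨆ i, ⨆ j, |M i j|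

/-- Matrix ∞-norm: maximum absolute row sum. -/
noncomputable def matInfNorm {m n : Type*} [Fintype m] [Fintype n] (M : Matrix m n ℝ) : ℝ :=
  ⨆ i, ∑ j, |M i j|

/-- Matrix 1-norm: maximum absolute column sum. -/
noncomputable def matOneNorm {m n : Type*} [Fintype m] [Fintype n] (M : Matrix m n ℝ) : ℝ :=
  ⨆ j, ∑ i, |M i j|

/-- Euclidean norm of a vector. -/
noncomputable def vec2Norm {n : Type*} [Fintype n] (x : n → ℝ) : ℝ :=
  Real.sqrt (∑ i, (x i) ^ 2)

/-- ℓ∞ norm of a vector. -/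
noncomputable def vecSupNorm {n : Type*} [Fintype n] (x : n → ℝ) : ℝ :=
  ⨆ i, |x i|

/-- Spectral norm (operator 2-norm) of a matrix. -/
noncomputable def matSpecNorm {m n : Type*} [Fintype m] [Fintype n] (M : Matrix m n ℝ) : ℝ :=
  sSup {c : ℝ | ∃ x : n → ℝ, vec2Norm x ≤ 1 ∧ c = vec2Norm (M.mulVec x)}

/-- Coherence of a d × r matrix with orthonormal columns. -/
noncomputable def matCoherence {d r : ℕ} (V : Matrix (Fin d) (Fin r) ℝ) : ℝ :=
  ((d : ℝ) / (r : ℝ)) * ⨆ i, ∑ j, (V i j) ^ 2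

/-- Inverse of the positive semidefinite square root of a matrix (junk value otherwise). -/
noncomputable def matInvSqrt {n : Type*} [Fintype n] [DecidableEq n] (S : Matrix n n ℝ) :
    Matrix n n ℝ :=
  letI := Classical.propDecidable
  if h : S.PosSemidef then
    ((h.1.eigenvectorUnitary : Matrix n n ℝ) * Matrix.diagonal ((↑) ∘ (√·) ∘ h.1.eigenvalues) *
      (star h.1.eigenvectorUnitary : Matrix n n ℝ))⁻¹ else 0

/-- Weighted max-norm for matrices with d₁ + d₂ rows. -/
noncomputable def wMaxNorm {d₁ d₂ : ℕ} {n : Type*} [Fintype n]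
    (M : Matrix (Fin d₁ ⊕ Fin d₂) n ℝ) : ℝ :=
  matMaxNorm (Matrix.of fun i j =>
    (Sum.elim (fun _ : Fin d₁ => Real.sqrt d₁) (fun _ : Fin d₂ => Real.sqrt d₂) i) * M i j)

/-- Huber loss with parameter α. -/
noncomputable def huberLoss (α x : ℝ) : ℝ := if |x| ≤ α then x ^ 2 else 2 * α * |x| - α ^ 2

section helper
variable {m n : Type*} [Fintype m] [Fintype n]

lemma abs_le_matMaxNorm [Nonempty m] [Nonempty n] (M : Matrix m n ℝ) (i : m) (j : n) :
    |M i j| ≤ matMaxNorm M := by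
  unfold matMaxNorm
  exact le_trans (le_ciSup (Set.Finite.bddAbove (Set.finite_range fun j => |M i j|)) j)
    (le_ciSup (Set.Finite.bddAbove (Set.finite_range fun i => ⨆ j, |M i j|)) i)

lemma matMaxNorm_nonneg [Nonempty m] [Nonempty n] (M : Matrix m n ℝ) : 0 ≤ matMaxNorm M :=
  le_trans (abs_nonneg _) (abs_le_matMaxNorm M (Classical.arbitrary m) (Classical.arbitrary n))

lemma rowsum_le_matInfNorm [Nonempty m] (M : Matrix m n ℝ) (i : m) :
    ∑ j, |M i j| ≤ matInfNorm M := by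
  unfold matInfNorm
  exact le_ciSup (Set.Finite.bddAbove (Set.finite_range fun i => ∑ j, |M i j|)) i

lemma matInfNorm_nonneg [Nonempty m] (M : Matrix m n ℝ) : 0 ≤ matInfNorm M :=
  le_trans (Finset.sum_nonneg fun _ _ => abs_nonneg _)
    (rowsum_le_matInfNorm M (Classical.arbitrary m))

lemma colsum_le_matOneNorm [Nonempty n] (M : Matrix m n ℝ) (j : n) :
    ∑ i, |M i j| ≤ matOneNorm M := by
  unfold matOneNorm
  exact le_ciSup (Set.Finite.bddAbove (Set.finite_range fun j => ∑ i, |M i j|)) j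

lemma matOneNorm_nonneg [Nonempty n] (M : Matrix m n ℝ) : 0 ≤ matOneNorm M :=
  le_trans (Finset.sum_nonneg fun _ _ => abs_nonneg _)
    (colsum_le_matOneNorm M (Classical.arbitrary n))

/-- Cauchy–Schwarz for finite sums, abs form. -/
lemma abs_sum_mul_le (x y : n → ℝ) :
    |∑ i, x i * y i| ≤ Real.sqrt (∑ i, (x i) ^ 2) * Real.sqrt (∑ i, (y i) ^ 2) := by
  have h := Finset.sum_mul_sq_le_sq_mul_sq Finset.univ x y
  have h2 : |∑ i, x i * y i| = Real.sqrt ((∑ i, x i * y i) ^ 2) := by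
    rw [Real.sqrt_sq_eq_abs]
  rw [h2, ← Real.sqrt_mul (Finset.sum_nonneg fun _ _ => sq_nonneg _)]
  exact Real.sqrt_le_sqrt h

lemma sum_abs_le_sqrt_card (x : n → ℝ) :
    ∑ i, |x i| ≤ Real.sqrt (Fintype.card n) * Real.sqrt (∑ i, (x i) ^ 2) := by
  have h := abs_sum_mul_le (fun i => |x i|) (fun _ : n => (1 : ℝ))
  simp only [mul_one, one_pow, sq_abs] at h
  calc ∑ i, |x i| = abs (∑ i, |x i|) := by
        rw [abs_of_nonneg (Finset.sum_nonneg fun _ _ => abs_nonneg _)]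
    _ ≤ Real.sqrt (∑ i, (x i) ^ 2) * Real.sqrt (∑ _i : n, (1:ℝ)) := h
    _ = Real.sqrt (Fintype.card n) * Real.sqrt (∑ i, (x i) ^ 2) := by
        rw [mul_comm]; congr 2; simp

lemma rowsum_mul_bound {m p n : Type*} [Fintype m] [Fintype p] [Fintype n]
    (X : Matrix m p ℝ) (Y : Matrix p n ℝ) (i : m) :
    ∑ j, |(X * Y) i j| ≤ ∑ c, |X i c| * ∑ j, |Y c j| := by
  calc ∑ j, |(X * Y) i j| ≤ ∑ j, ∑ c, |X i c| * |Y c j| := by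
        apply Finset.sum_le_sum; intro j _
        rw [Matrix.mul_apply]
        exact (Finset.abs_sum_le_sum_abs _ _).trans
          (le_of_eq (Finset.sum_congr rfl (fun c _ => abs_mul _ _)))
    _ = ∑ c, ∑ j, |X i c| * |Y c j| := Finset.sum_comm
    _ = ∑ c, |X i c| * ∑ j, |Y c j| := by
        apply Finset.sum_congr rfl; intro c _; rw [Finset.mul_sum]

lemma colsum_mul_bound {m p n : Type*} [Fintype m] [Fintype p] [Fintype n]
    (X : Matrix m p ℝ) (Y : Matrix p n ℝ) (j : n) :
    ∑ i, |(X * Y) i j| ≤ ∑ c, (∑ i, |X i c|) * |Y c j| := by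
  calc ∑ i, |(X * Y) i j| ≤ ∑ i, ∑ c, |X i c| * |Y c j| := by
        apply Finset.sum_le_sum; intro i _
        rw [Matrix.mul_apply]
        exact (Finset.abs_sum_le_sum_abs _ _).trans
          (le_of_eq (Finset.sum_congr rfl (fun c _ => abs_mul _ _)))
    _ = ∑ c, ∑ i, |X i c| * |Y c j| := Finset.sum_comm
    _ = ∑ c, (∑ i, |X i c|) * |Y c j| := by
        apply Finset.sum_congr rfl; intro c _; rw [Finset.sum_mul]

end helper

set_option maxHeartbeats 16000000 in
/-- Lower bound for the dilated linear operator in weighted max-norm, and invertibility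
of L̄₁^d (Lemma B.2 of Fan–Wang–Zhong). -/
theorem dilated_linear_operator_lower_bound
    (d₁ d₂ r : ℕ) (hd₁ : 0 < d₁) (hd₂ : 0 < d₂) (hr : 0 < r) (hrm : r ≤ min d₁ d₂)
    (A E : Matrix (Fin d₁) (Fin d₂) ℝ)
    (σ : Fin (min d₁ d₂) → ℝ) (u : Fin (min d₁ d₂) → Fin d₁ → ℝ)
    (v : Fin (min d₁ d₂) → Fin d₂ → ℝ)
    (hrank : (r : ℕ) ≤ A.rank)
    (hu : ∀ i j, ∑ k, u i k * u j k = if i = j then (1 : ℝ) else 0)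
    (hv : ∀ i j, ∑ k, v i k * v j k = if i = j then (1 : ℝ) else 0)
    (hσpos : ∀ i, 0 ≤ σ i)
    (hσdec : ∀ i j : Fin (min d₁ d₂), i ≤ j → σ j ≤ σ i)
    (hA : ∀ a b, A a b = ∑ k, σ k * u k a * v k b)
    (U : Matrix (Fin d₁) (Fin r) ℝ) (hU : U = Matrix.of fun a k => u (Fin.castLE hrm k) a)
    (V : Matrix (Fin d₂) (Fin r) ℝ) (hV : V = Matrix.of fun b k => v (Fin.castLE hrm k) b)
    (Ar : Matrix (Fin d₁) (Fin d₂) ℝ)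
    (hAr : Ar = Matrix.of fun a b => ∑ k : Fin r,
      σ (Fin.castLE hrm k) * u (Fin.castLE hrm k) a * v (Fin.castLE hrm k) b)
    (μ₀ τ₀ ε₀ κ₀ : ℝ)
    (hμ₀ : μ₀ = max (matCoherence U) (matCoherence V))
    (hτ₀ : τ₀ = max (Real.sqrt ((d₁ : ℝ) / (d₂ : ℝ)) * matInfNorm E)
                    (Real.sqrt ((d₂ : ℝ) / (d₁ : ℝ)) * matOneNorm E))
    (hε₀ : ε₀ = max (Real.sqrt ((d₁ : ℝ) / (d₂ : ℝ)) * matInfNorm (A - Ar))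
                    (Real.sqrt ((d₂ : ℝ) / (d₁ : ℝ)) * matOneNorm (A - Ar)))
    (hκ₀ : κ₀ = max (Real.sqrt d₁ * matMaxNorm (E * V))
                    (Real.sqrt d₂ * matMaxNorm (Eᵀ * U)))
    (Ad Ed : Matrix (Fin d₁ ⊕ Fin d₂) (Fin d₁ ⊕ Fin d₂) ℝ)
    (hAd : Ad = Matrix.fromBlocks 0 A Aᵀ 0)
    (hEd : Ed = Matrix.fromBlocks 0 E Eᵀ 0)
    (Vd : Matrix (Fin d₁ ⊕ Fin d₂) (Fin r ⊕ Fin r) ℝ)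
    (hVd : Vd = (Real.sqrt 2)⁻¹ • Matrix.fromBlocks U U V (-V))
    (Vdp : Matrix (Fin d₁ ⊕ Fin d₂) (Fin (d₁ + d₂ - 2 * r)) ℝ)
    (hVdp1 : Vdpᵀ * Vdp = 1) (hVdp2 : Vdᵀ * Vdp = 0)
    (Lam₁d : Matrix (Fin r ⊕ Fin r) (Fin r ⊕ Fin r) ℝ)
    (hLam₁d : Lam₁d = Matrix.diagonal (Sum.elim
      (fun i : Fin r => σ (Fin.castLE hrm i)) (fun i : Fin r => -σ (Fin.castLE hrm i))))
    (Hd : Matrix (Fin d₁ ⊕ Fin d₂) (Fin r ⊕ Fin r) ℝ)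
    (hHd : Hd = Vdp * (Vdpᵀ * Ed * Vd))
    (L₁d : Matrix (Fin r ⊕ Fin r) (Fin r ⊕ Fin r) ℝ)
    (hL₁d : L₁d = Lam₁d + Vdᵀ * Ed * Vd)
    (L₂d : Matrix (Fin d₁ ⊕ Fin d₂) (Fin d₁ ⊕ Fin d₂) ℝ)
    (hL₂d : L₂d = Vdp * (Vdpᵀ * (Ad + Ed) * Vdp) * Vdpᵀ)
    : (∀ Q₀d : Matrix (Fin d₁ ⊕ Fin d₂) (Fin r ⊕ Fin r) ℝ, wMaxNorm Q₀d = 1 →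
        σ (Fin.castLE hrm ⟨r - 1, by omega⟩) - 4 * (r : ℝ) * μ₀ * (τ₀ + (r : ℝ) * κ₀) - ε₀ ≤
          wMaxNorm (Q₀d * L₁d - L₂d * Q₀d)) ∧
      (2 * κ₀ * (r : ℝ) * Real.sqrt μ₀ < σ (Fin.castLE hrm ⟨r - 1, by omega⟩) →
        IsUnit L₁d.det) := by  classical
  have hd1R : (0:ℝ) < d₁ := by exact_mod_cast hd₁
  have hd2R : (0:ℝ) < d₂ := by exact_mod_cast hd₂
  have hs1 : (0:ℝ) < Real.sqrt d₁ := Real.sqrt_pos.mpr hd1R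
  have hs2 : (0:ℝ) < Real.sqrt d₂ := Real.sqrt_pos.mpr hd2R
  have hrR : (1:ℝ) ≤ (r:ℝ) := by exact_mod_cast hr
  have hrpos : (0:ℝ) < (r:ℝ) := lt_of_lt_of_le one_pos hrR
  haveI : Nonempty (Fin d₁) := ⟨⟨0, hd₁⟩⟩
  haveI : Nonempty (Fin d₂) := ⟨⟨0, hd₂⟩⟩
  haveI : Nonempty (Fin r) := ⟨⟨0, hr⟩⟩
  have hcastinj : ∀ j k : Fin r, Fin.castLE hrm j = Fin.castLE hrm k ↔ j = k := by
    intro j k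
    constructor
    · intro h; exact Fin.ext (by simpa using congrArg Fin.val h)
    · intro h; rw [h]
  -- matrix orthonormality
  have hUtU : Uᵀ * U = 1 := by
    ext j k
    simp only [Matrix.mul_apply, Matrix.transpose_apply, hU, Matrix.of_apply, Matrix.one_apply]
    rw [hu (Fin.castLE hrm j) (Fin.castLE hrm k)]
    simp [hcastinj j k]
  have hVtV : Vᵀ * V = 1 := by
    ext j k
    simp only [Matrix.mul_apply, Matrix.transpose_apply, hV, Matrix.of_apply, Matrix.one_apply]
    rw [hv (Fin.castLE hrm j) (Fin.castLE hrm k)]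
    simp [hcastinj j k]
  have hUcol : ∀ j : Fin r, ∑ a, (U a j)^2 = 1 := by
    intro j
    have h := hu (Fin.castLE hrm j) (Fin.castLE hrm j)
    simp only [if_pos rfl] at h
    simp only [hU, Matrix.of_apply, pow_two]
    exact h
  have hVcol : ∀ j : Fin r, ∑ b, (V b j)^2 = 1 := by
    intro j
    have h := hv (Fin.castLE hrm j) (Fin.castLE hrm j)
    simp only [if_pos rfl] at h
    simp only [hV, Matrix.of_apply, pow_two]
    exact h
  -- coherence row bounds
  have hsupU : ∀ a, ∑ j, (U a j)^2 ≤ μ₀ * r / d₁ := by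
    intro a
    have h1 : matCoherence U ≤ μ₀ := hμ₀ ▸ le_max_left _ _
    have h2 : (∑ j, (U a j)^2) ≤ ⨆ i, ∑ j, (U i j)^2 :=
      le_ciSup (f := fun i => ∑ j, (U i j)^2) (Set.Finite.bddAbove (Set.finite_range _)) a
    unfold matCoherence at h1
    have h3 : (d₁:ℝ)/r * (∑ j, (U a j)^2) ≤ μ₀ :=
      le_trans (mul_le_mul_of_nonneg_left h2 (by positivity)) h1
    calc ∑ j, (U a j)^2 = ((r:ℝ)/d₁) * ((d₁:ℝ)/r * (∑ j, (U a j)^2)) := by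
          field_simp
      _ ≤ ((r:ℝ)/d₁) * μ₀ := by
          apply mul_le_mul_of_nonneg_left h3 (by positivity)
      _ = μ₀ * r / d₁ := by ring
  have hsupV : ∀ b, ∑ j, (V b j)^2 ≤ μ₀ * r / d₂ := by
    intro b
    have h1 : matCoherence V ≤ μ₀ := hμ₀ ▸ le_max_right _ _
    have h2 : (∑ j, (V b j)^2) ≤ ⨆ i, ∑ j, (V i j)^2 :=
      le_ciSup (f := fun i => ∑ j, (V i j)^2) (Set.Finite.bddAbove (Set.finite_range _)) b
    unfold matCoherence at h1
    have h3 : (d₂:ℝ)/r * (∑ j, (V b j)^2) ≤ μ₀ :=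
      le_trans (mul_le_mul_of_nonneg_left h2 (by positivity)) h1
    calc ∑ j, (V b j)^2 = ((r:ℝ)/d₂) * ((d₂:ℝ)/r * (∑ j, (V b j)^2)) := by
          field_simp
      _ ≤ ((r:ℝ)/d₂) * μ₀ := by
          apply mul_le_mul_of_nonneg_left h3 (by positivity)
      _ = μ₀ * r / d₂ := by ring
  -- μ₀ ≥ 1
  have hμ1 : 1 ≤ μ₀ := by
    have htot : ∑ a, ∑ j, (U a j)^2 = (r:ℝ) := by
      rw [Finset.sum_comm]
      simp [hUcol]
    have hconst : ∑ _a : Fin d₁, ((r:ℝ)/d₁) ≤ ∑ a, ∑ j, (U a j)^2 := by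
      rw [htot, Finset.sum_const, Finset.card_univ, Fintype.card_fin, nsmul_eq_mul]
      rw [mul_div_assoc']
      apply le_of_eq
      field_simp
    obtain ⟨a, -, ha⟩ := Finset.exists_le_of_sum_le (Finset.univ_nonempty) hconst
    have h2 : ((r:ℝ)/d₁) ≤ ⨆ i, ∑ j, (U i j)^2 :=
      le_trans ha (le_ciSup (f := fun i => ∑ j, (U i j)^2) (Set.Finite.bddAbove (Set.finite_range _)) a)
    have h3 : (1:ℝ) ≤ matCoherence U := by
      unfold matCoherence
      calc (1:ℝ) = (d₁:ℝ)/r * ((r:ℝ)/d₁) := by field_simp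
        _ ≤ (d₁:ℝ)/r * ⨆ i, ∑ j, (U i j)^2 :=
          mul_le_mul_of_nonneg_left h2 (by positivity)
    exact le_trans h3 (hμ₀ ▸ le_max_left _ _)
  have hμ0 : (0:ℝ) ≤ μ₀ := le_trans zero_le_one hμ1
  -- nonnegativity of κ₀ τ₀ ε₀
  have hκ0 : 0 ≤ κ₀ := by
    rw [hκ₀]
    exact le_trans (mul_nonneg (Real.sqrt_nonneg _) (matMaxNorm_nonneg _)) (le_max_left _ _)
  have hτ0 : 0 ≤ τ₀ := by
    rw [hτ₀]
    exact le_trans (mul_nonneg (Real.sqrt_nonneg _) (matInfNorm_nonneg _)) (le_max_left _ _)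
  have hε0 : 0 ≤ ε₀ := by
    rw [hε₀]
    exact le_trans (mul_nonneg (Real.sqrt_nonneg _) (matInfNorm_nonneg _)) (le_max_left _ _)
  -- σ_r facts
  have hσr_le : ∀ k : Fin r, σ (Fin.castLE hrm ⟨r - 1, by omega⟩) ≤ σ (Fin.castLE hrm k) := by
    intro k
    apply hσdec
    simp only [Fin.le_def, Fin.coe_castLE]
    omega
  -- entry bounds involving κ₀
  have hEV : ∀ (a : Fin d₁) (l : Fin r), |(E * V) a l| ≤ κ₀ / Real.sqrt d₁ := by
    intro a l
    rw [le_div_iff₀ hs1, mul_comm]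
    calc Real.sqrt d₁ * |(E * V) a l| ≤ Real.sqrt d₁ * matMaxNorm (E * V) :=
          mul_le_mul_of_nonneg_left (abs_le_matMaxNorm _ a l) (Real.sqrt_nonneg _)
      _ ≤ κ₀ := hκ₀ ▸ le_max_left _ _
  have hEtU : ∀ (b : Fin d₂) (l : Fin r), |(Eᵀ * U) b l| ≤ κ₀ / Real.sqrt d₂ := by
    intro b l
    rw [le_div_iff₀ hs2, mul_comm]
    calc Real.sqrt d₂ * |(Eᵀ * U) b l| ≤ Real.sqrt d₂ * matMaxNorm (Eᵀ * U) :=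
          mul_le_mul_of_nonneg_left (abs_le_matMaxNorm _ b l) (Real.sqrt_nonneg _)
      _ ≤ κ₀ := hκ₀ ▸ le_max_right _ _
  have hG : ∀ (j l : Fin r), |(Uᵀ * (E * V)) j l| ≤ κ₀ := by
    intro j l
    have h1 : |∑ a, U a j * (E * V) a l| ≤
        Real.sqrt (∑ a, (U a j)^2) * Real.sqrt (∑ a, ((E * V) a l)^2) :=
      abs_sum_mul_le _ _
    have h2 : ∑ a, ((E * V) a l)^2 ≤ κ₀^2 := by
      calc ∑ a, ((E * V) a l)^2 ≤ ∑ _a : Fin d₁, (κ₀ / Real.sqrt d₁)^2 := by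
            apply Finset.sum_le_sum
            intro a _
            rw [← sq_abs]
            exact pow_le_pow_left₀ (abs_nonneg _) (hEV a l) 2
        _ = κ₀^2 := by
            rw [Finset.sum_const, Finset.card_univ, Fintype.card_fin, nsmul_eq_mul,
              div_pow, Real.sq_sqrt (le_of_lt hd1R)]
            field_simp
    calc |(Uᵀ * (E * V)) j l| = |∑ a, U a j * (E * V) a l| := by
          simp [Matrix.mul_apply, Matrix.transpose_apply]
      _ ≤ Real.sqrt (∑ a, (U a j)^2) * Real.sqrt (∑ a, ((E * V) a l)^2) := h1
      _ ≤ 1 * Real.sqrt (κ₀^2) := by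
          apply mul_le_mul
          · rw [hUcol j, Real.sqrt_one]
          · exact Real.sqrt_le_sqrt h2
          · exact Real.sqrt_nonneg _
          · norm_num
      _ = κ₀ := by rw [one_mul, Real.sqrt_sq hκ0]
  have hGt : ∀ (j l : Fin r), |(Vᵀ * (Eᵀ * U)) j l| ≤ κ₀ := by
    intro j l
    have h1 : |∑ b, V b j * (Eᵀ * U) b l| ≤
        Real.sqrt (∑ b, (V b j)^2) * Real.sqrt (∑ b, ((Eᵀ * U) b l)^2) :=
      abs_sum_mul_le _ _
    have h2 : ∑ b, ((Eᵀ * U) b l)^2 ≤ κ₀^2 := by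
      calc ∑ b, ((Eᵀ * U) b l)^2 ≤ ∑ _b : Fin d₂, (κ₀ / Real.sqrt d₂)^2 := by
            apply Finset.sum_le_sum
            intro b _
            rw [← sq_abs]
            exact pow_le_pow_left₀ (abs_nonneg _) (hEtU b l) 2
        _ = κ₀^2 := by
            rw [Finset.sum_const, Finset.card_univ, Fintype.card_fin, nsmul_eq_mul,
              div_pow, Real.sq_sqrt (le_of_lt hd2R)]
            field_simp
    calc |(Vᵀ * (Eᵀ * U)) j l| = |∑ b, V b j * (Eᵀ * U) b l| := by
          simp [Matrix.mul_apply, Matrix.transpose_apply]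
      _ ≤ Real.sqrt (∑ b, (V b j)^2) * Real.sqrt (∑ b, ((Eᵀ * U) b l)^2) := h1
      _ ≤ 1 * Real.sqrt (κ₀^2) := by
          apply mul_le_mul
          · rw [hVcol j, Real.sqrt_one]
          · exact Real.sqrt_le_sqrt h2
          · exact Real.sqrt_nonneg _
          · norm_num
      _ = κ₀ := by rw [one_mul, Real.sqrt_sq hκ0]
  -- E₁₁ structure
  have hsqrt2 : (Real.sqrt 2)⁻¹ * (Real.sqrt 2)⁻¹ = (2:ℝ)⁻¹ := by
    rw [← mul_inv, Real.mul_self_sqrt (by norm_num : (0:ℝ) ≤ 2)]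
  have hEdVd : Ed * Vd = (Real.sqrt 2)⁻¹ •
      Matrix.fromBlocks (E*V) (-(E*V)) (Eᵀ*U) (Eᵀ*U) := by
    rw [hEd, hVd, Matrix.mul_smul, Matrix.fromBlocks_multiply]
    simp [Matrix.mul_neg]
  have hVdT : Vdᵀ = (Real.sqrt 2)⁻¹ • Matrix.fromBlocks Uᵀ Vᵀ Uᵀ (-Vᵀ) := by
    rw [hVd, Matrix.transpose_smul, Matrix.fromBlocks_transpose, Matrix.transpose_neg]
  have hE11eq : Vdᵀ * Ed * Vd = (2:ℝ)⁻¹ • Matrix.fromBlocks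
      (Uᵀ * (E*V) + Vᵀ * (Eᵀ*U)) (Vᵀ * (Eᵀ*U) - Uᵀ * (E*V))
      (Uᵀ * (E*V) - Vᵀ * (Eᵀ*U)) (-(Uᵀ * (E*V) + Vᵀ * (Eᵀ*U))) := by
    rw [Matrix.mul_assoc, hEdVd, hVdT, Matrix.smul_mul, Matrix.mul_smul, smul_smul, hsqrt2,
      Matrix.fromBlocks_multiply]
    ext p q
    rcases p with j | j <;> rcases q with l | l <;>
      simp only [Matrix.smul_apply, Matrix.fromBlocks_apply₁₁, Matrix.fromBlocks_apply₁₂,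
        Matrix.fromBlocks_apply₂₁, Matrix.fromBlocks_apply₂₂, Matrix.add_apply,
        Matrix.sub_apply, Matrix.neg_apply, Matrix.mul_neg, Matrix.neg_mul,
        smul_eq_mul] <;> ring
  have hE11 : ∀ (p q : Fin r ⊕ Fin r), |(Vdᵀ * Ed * Vd) p q| ≤ κ₀ := by
    have key : ∀ x y : ℝ, |x| ≤ κ₀ → |y| ≤ κ₀ → |(2:ℝ)⁻¹ * (x + y)| ≤ κ₀ := by
      intro x y hx hy
      rw [abs_mul, abs_of_nonneg (by norm_num : (0:ℝ) ≤ 2⁻¹)]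
      have := abs_add_le x y
      linarith
    intro p q
    rw [hE11eq]
    rcases p with j | j <;> rcases q with l | l <;>
      simp only [Matrix.smul_apply, Matrix.fromBlocks_apply₁₁, Matrix.fromBlocks_apply₁₂,
        Matrix.fromBlocks_apply₂₁, Matrix.fromBlocks_apply₂₂, Matrix.add_apply,
        Matrix.sub_apply, Matrix.neg_apply, smul_eq_mul]
    · exact key _ _ (hG j l) (hGt j l)
    · rw [sub_eq_add_neg]
      exact key _ _ (hGt j l) (by rw [abs_neg]; exact hG j l)
    · rw [sub_eq_add_neg]
      exact key _ _ (hG j l) (by rw [abs_neg]; exact hGt j l)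
    · rw [mul_neg, abs_neg]
      exact key _ _ (hG j l) (hGt j l)
  -- structural identities
  have hUtA : Uᵀ * A = Matrix.of fun (j : Fin r) b =>
      σ (Fin.castLE hrm j) * v (Fin.castLE hrm j) b := by
    ext j b
    simp only [Matrix.mul_apply, Matrix.transpose_apply, hU, Matrix.of_apply, hA]
    have step : ∀ a, u (Fin.castLE hrm j) a * (∑ k, σ k * u k a * v k b)
        = ∑ k, σ k * v k b * (u (Fin.castLE hrm j) a * u k a) := by
      intro a; rw [Finset.mul_sum]; apply Finset.sum_congr rfl; intros; ring
    simp only [step]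
    rw [Finset.sum_comm]
    have step2 : ∀ k, ∑ a, σ k * v k b * (u (Fin.castLE hrm j) a * u k a)
        = σ k * v k b * ∑ a, u (Fin.castLE hrm j) a * u k a := fun k =>
      (Finset.mul_sum _ _ _).symm
    simp only [step2, hu]
    simp [Finset.sum_ite_eq]
  have hUtAr : Uᵀ * Ar = Matrix.of fun (j : Fin r) b =>
      σ (Fin.castLE hrm j) * v (Fin.castLE hrm j) b := by
    ext j b
    simp only [Matrix.mul_apply, Matrix.transpose_apply, hU, Matrix.of_apply, hAr]
    have step : ∀ a, u (Fin.castLE hrm j) a *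
        (∑ k : Fin r, σ (Fin.castLE hrm k) * u (Fin.castLE hrm k) a * v (Fin.castLE hrm k) b)
        = ∑ k : Fin r, σ (Fin.castLE hrm k) * v (Fin.castLE hrm k) b *
            (u (Fin.castLE hrm j) a * u (Fin.castLE hrm k) a) := by
      intro a; rw [Finset.mul_sum]; apply Finset.sum_congr rfl; intros; ring
    simp only [step]
    rw [Finset.sum_comm]
    have step2 : ∀ k : Fin r, ∑ a, σ (Fin.castLE hrm k) * v (Fin.castLE hrm k) b *
        (u (Fin.castLE hrm j) a * u (Fin.castLE hrm k) a)
        = σ (Fin.castLE hrm k) * v (Fin.castLE hrm k) b *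
          ∑ a, u (Fin.castLE hrm j) a * u (Fin.castLE hrm k) a := fun k =>
      (Finset.mul_sum _ _ _).symm
    simp only [step2, hu, hcastinj]
    simp [Finset.sum_ite_eq]
  have hAV : A * V = Matrix.of fun a (j : Fin r) =>
      σ (Fin.castLE hrm j) * u (Fin.castLE hrm j) a := by
    ext a j
    simp only [Matrix.mul_apply, hV, Matrix.of_apply, hA]
    have step : ∀ b, (∑ k, σ k * u k a * v k b) * v (Fin.castLE hrm j) b
        = ∑ k, σ k * u k a * (v k b * v (Fin.castLE hrm j) b) := by
      intro b; rw [Finset.sum_mul]; apply Finset.sum_congr rfl; intros; ring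
    simp only [step]
    rw [Finset.sum_comm]
    have step2 : ∀ k, ∑ b, σ k * u k a * (v k b * v (Fin.castLE hrm j) b)
        = σ k * u k a * ∑ b, v k b * v (Fin.castLE hrm j) b := fun k =>
      (Finset.mul_sum _ _ _).symm
    simp only [step2, hv]
    simp [Finset.sum_ite_eq']
  have hArV : Ar * V = Matrix.of fun a (j : Fin r) =>
      σ (Fin.castLE hrm j) * u (Fin.castLE hrm j) a := by
    ext a j
    simp only [Matrix.mul_apply, hV, Matrix.of_apply, hAr]
    have step : ∀ b, (∑ k : Fin r, σ (Fin.castLE hrm k) * u (Fin.castLE hrm k) a *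
        v (Fin.castLE hrm k) b) * v (Fin.castLE hrm j) b
        = ∑ k : Fin r, σ (Fin.castLE hrm k) * u (Fin.castLE hrm k) a *
            (v (Fin.castLE hrm k) b * v (Fin.castLE hrm j) b) := by
      intro b; rw [Finset.sum_mul]; apply Finset.sum_congr rfl; intros; ring
    simp only [step]
    rw [Finset.sum_comm]
    have step2 : ∀ k : Fin r, ∑ b, σ (Fin.castLE hrm k) * u (Fin.castLE hrm k) a *
        (v (Fin.castLE hrm k) b * v (Fin.castLE hrm j) b)
        = σ (Fin.castLE hrm k) * u (Fin.castLE hrm k) a *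
          ∑ b, v (Fin.castLE hrm k) b * v (Fin.castLE hrm j) b := fun k =>
      (Finset.mul_sum _ _ _).symm
    simp only [step2, hv, hcastinj]
    simp [Finset.sum_ite_eq']
  have hUS : U * (Matrix.of fun (j : Fin r) b =>
      σ (Fin.castLE hrm j) * v (Fin.castLE hrm j) b) = Ar := by
    ext a b
    simp only [Matrix.mul_apply, hU, Matrix.of_apply, hAr]
    apply Finset.sum_congr rfl; intros; ring
  have hSVt : (Matrix.of fun a (j : Fin r) =>
      σ (Fin.castLE hrm j) * u (Fin.castLE hrm j) a) * Vᵀ = Ar := by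
    ext a b
    simp only [Matrix.mul_apply, hV, Matrix.of_apply, hAr, Matrix.transpose_apply]
  have hPUA : U * Uᵀ * A = Ar := by rw [Matrix.mul_assoc, hUtA, hUS]
  have hPUAr : U * Uᵀ * Ar = Ar := by rw [Matrix.mul_assoc, hUtAr, hUS]
  have hAPV : A * (V * Vᵀ) = Ar := by rw [← Matrix.mul_assoc, hAV, hSVt]
  have hArPV : Ar * (V * Vᵀ) = Ar := by rw [← Matrix.mul_assoc, hArV, hSVt]
  -- the deflated matrix F
  have hFeq : (1 - U * Uᵀ) * (A + E) * (1 - V * Vᵀ) =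
      (A - Ar) + (E - U * Uᵀ * E - E * (V * Vᵀ) + U * Uᵀ * E * (V * Vᵀ)) := by
    have e1 : (1 - U * Uᵀ) * (A + E) = A + E - Ar - U * Uᵀ * E := by
      rw [Matrix.sub_mul, Matrix.one_mul, Matrix.mul_add, hPUA]
      abel
    rw [e1, Matrix.mul_sub, Matrix.mul_one]
    rw [Matrix.sub_mul, Matrix.sub_mul, Matrix.add_mul, hAPV, hArPV]
    abel
  -- Vd structure
  have hPi : Vd * Vdᵀ = Matrix.fromBlocks (U * Uᵀ) 0 0 (V * Vᵀ) := by
    rw [hVdT, hVd, Matrix.smul_mul, Matrix.mul_smul, smul_smul, hsqrt2,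
      Matrix.fromBlocks_multiply]
    ext p q
    rcases p with a | a <;> rcases q with c | c <;>
      simp only [Matrix.smul_apply, Matrix.fromBlocks_apply₁₁, Matrix.fromBlocks_apply₁₂,
        Matrix.fromBlocks_apply₂₁, Matrix.fromBlocks_apply₂₂, Matrix.add_apply,
        Matrix.neg_apply, Matrix.mul_neg, Matrix.neg_mul, Matrix.zero_apply, neg_neg,
        smul_eq_mul, Matrix.sub_apply] <;> ring
  have hVdtVd : Vdᵀ * Vd = 1 := by
    rw [hVdT, hVd, Matrix.smul_mul, Matrix.mul_smul, smul_smul, hsqrt2,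
      Matrix.fromBlocks_multiply]
    rw [show ((1 : Matrix (Fin r ⊕ Fin r) (Fin r ⊕ Fin r) ℝ)
      = Matrix.fromBlocks 1 0 0 1) from (Matrix.fromBlocks_one).symm]
    ext p q
    rcases p with j | j <;> rcases q with l | l <;>
      simp only [Matrix.smul_apply, Matrix.fromBlocks_apply₁₁, Matrix.fromBlocks_apply₁₂,
        Matrix.fromBlocks_apply₂₁, Matrix.fromBlocks_apply₂₂, Matrix.add_apply,
        Matrix.neg_apply, Matrix.mul_neg, Matrix.neg_mul, Matrix.zero_apply, neg_neg,
        smul_eq_mul, hUtU, hVtV] <;> ring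
  -- completion to a projector
  have hVdpVd : Vdpᵀ * Vd = 0 := by
    have h := congrArg Matrix.transpose hVdp2
    rwa [Matrix.transpose_mul, Matrix.transpose_transpose, Matrix.transpose_zero] at h
  have hProj : Vdp * Vdpᵀ = 1 - Vd * Vdᵀ := by
    have hcard : Fintype.card (Fin d₁ ⊕ Fin d₂)
        = Fintype.card ((Fin r ⊕ Fin r) ⊕ Fin (d₁ + d₂ - 2 * r)) := by
      simp only [Fintype.card_sum, Fintype.card_fin]
      omega
    have e : (Fin d₁ ⊕ Fin d₂) ≃ ((Fin r ⊕ Fin r) ⊕ Fin (d₁ + d₂ - 2 * r)) :=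
      Fintype.equivOfCardEq hcard
    have h2 : Matrix.fromRows Vdᵀ Vdpᵀ * Matrix.fromCols Vd Vdp = 1 := by
      rw [Matrix.fromRows_mul_fromCols, hVdtVd, hVdp2, hVdpVd, hVdp1,
        Matrix.fromBlocks_one]
    have h1 : Matrix.fromCols Vd Vdp * Matrix.fromRows Vdᵀ Vdpᵀ = 1 :=
      (Matrix.fromCols_mul_fromRows_eq_one_comm e Vd Vdp Vdᵀ Vdpᵀ).mpr h2
    rw [Matrix.fromCols_mul_fromRows] at h1
    rw [← h1]
    abel
  -- block structure of L₂d
  have hL2 : L₂d = Matrix.fromBlocks 0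
      ((A - Ar) + (E - U * Uᵀ * E - E * (V * Vᵀ) + U * Uᵀ * E * (V * Vᵀ)))
      ((A - Ar) + (E - U * Uᵀ * E - E * (V * Vᵀ) + U * Uᵀ * E * (V * Vᵀ)))ᵀ 0 := by
    have hassoc : L₂d = (Vdp * Vdpᵀ) * (Ad + Ed) * (Vdp * Vdpᵀ) := by
      rw [hL₂d]
      simp only [Matrix.mul_assoc]
    rw [hassoc, hProj, hPi]
    have hone : (1 : Matrix (Fin d₁ ⊕ Fin d₂) (Fin d₁ ⊕ Fin d₂) ℝ)
        = Matrix.fromBlocks 1 0 0 1 := (Matrix.fromBlocks_one).symm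
    have hsub : (1 : Matrix (Fin d₁ ⊕ Fin d₂) (Fin d₁ ⊕ Fin d₂) ℝ)
        - Matrix.fromBlocks (U * Uᵀ) 0 0 (V * Vᵀ)
        = Matrix.fromBlocks (1 - U * Uᵀ) 0 0 (1 - V * Vᵀ) := by
      rw [hone]
      ext p q
      rcases p with a | a <;> rcases q with c | c <;>
        simp [Matrix.sub_apply, Matrix.one_apply]
    have hAdEd : Ad + Ed = Matrix.fromBlocks 0 (A + E) (A + E)ᵀ 0 := by
      rw [hAd, hEd, Matrix.transpose_add]
      ext p q
      rcases p with a | a <;> rcases q with c | c <;> simp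
    rw [hsub, hAdEd, Matrix.fromBlocks_multiply, Matrix.fromBlocks_multiply]
    simp only [Matrix.mul_zero, Matrix.zero_mul, add_zero, zero_add]
    have hFt : ((1 - U * Uᵀ) * (A + E) * (1 - V * Vᵀ))ᵀ
        = (1 - V * Vᵀ) * (A + E)ᵀ * (1 - U * Uᵀ) := by
      rw [Matrix.transpose_mul, Matrix.transpose_mul]
      have h1 : (1 - V * Vᵀ)ᵀ = 1 - V * Vᵀ := by
        rw [Matrix.transpose_sub, Matrix.transpose_one, Matrix.transpose_mul,
          Matrix.transpose_transpose]
      have h2 : (1 - U * Uᵀ)ᵀ = 1 - U * Uᵀ := by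
        rw [Matrix.transpose_sub, Matrix.transpose_one, Matrix.transpose_mul,
          Matrix.transpose_transpose]
      rw [h1, h2, Matrix.mul_assoc]
    rw [hFeq]
    rw [show (1 - V * Vᵀ) * (A + E)ᵀ * (1 - U * Uᵀ)
        = ((A - Ar) + (E - U * Uᵀ * E - E * (V * Vᵀ) + U * Uᵀ * E * (V * Vᵀ)))ᵀ from by
      rw [← hFt, hFeq]]
  -- sqrt algebra
  have hkey1 : Real.sqrt r * Real.sqrt (μ₀ * r) = (r:ℝ) * Real.sqrt μ₀ := by
    rw [← Real.sqrt_mul (by positivity : (0:ℝ) ≤ (r:ℝ)),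
      show (r:ℝ) * (μ₀ * r) = μ₀ * (r:ℝ)^2 from by ring,
      Real.sqrt_mul hμ0, Real.sqrt_sq (le_of_lt hrpos), mul_comm]
  have hkey2 : Real.sqrt d₁ * Real.sqrt (μ₀ * r / d₁) = Real.sqrt (μ₀ * r) := by
    rw [← Real.sqrt_mul (le_of_lt hd1R)]
    congr 1
    field_simp
  have hkey2' : Real.sqrt d₂ * Real.sqrt (μ₀ * r / d₂) = Real.sqrt (μ₀ * r) := by
    rw [← Real.sqrt_mul (le_of_lt hd2R)]
    congr 1
    field_simp
  have hμμ : Real.sqrt μ₀ * Real.sqrt μ₀ = μ₀ := Real.mul_self_sqrt hμ0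
  have hkey3 : (d₂:ℝ) * Real.sqrt (μ₀ * r / d₂) = Real.sqrt d₂ * Real.sqrt (μ₀ * r) := by
    calc (d₂:ℝ) * Real.sqrt (μ₀ * r / d₂)
        = Real.sqrt d₂ * (Real.sqrt d₂ * Real.sqrt (μ₀ * r / d₂)) := by
          rw [← mul_assoc, Real.mul_self_sqrt (le_of_lt hd2R)]
      _ = Real.sqrt d₂ * Real.sqrt (μ₀ * r) := by rw [hkey2']
  have hkey3' : (d₁:ℝ) * Real.sqrt (μ₀ * r / d₁) = Real.sqrt d₁ * Real.sqrt (μ₀ * r) := by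
    calc (d₁:ℝ) * Real.sqrt (μ₀ * r / d₁)
        = Real.sqrt d₁ * (Real.sqrt d₁ * Real.sqrt (μ₀ * r / d₁)) := by
          rw [← mul_assoc, Real.mul_self_sqrt (le_of_lt hd1R)]
      _ = Real.sqrt d₁ * Real.sqrt (μ₀ * r) := by rw [hkey2]
  -- ℓ¹ row bounds
  have hUabs : ∀ a, ∑ j, |U a j| ≤ Real.sqrt r * Real.sqrt (μ₀ * r / d₁) := by
    intro a
    refine (sum_abs_le_sqrt_card (fun j => U a j)).trans ?_
    rw [Fintype.card_fin]
    exact mul_le_mul_of_nonneg_left (Real.sqrt_le_sqrt (hsupU a)) (Real.sqrt_nonneg _)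
  have hVabs : ∀ b, ∑ j, |V b j| ≤ Real.sqrt r * Real.sqrt (μ₀ * r / d₂) := by
    intro b
    refine (sum_abs_le_sqrt_card (fun j => V b j)).trans ?_
    rw [Fintype.card_fin]
    exact mul_le_mul_of_nonneg_left (Real.sqrt_le_sqrt (hsupV b)) (Real.sqrt_nonneg _)
  have hU1 : ∀ a, Real.sqrt d₁ * (∑ j, |U a j|) ≤ (r:ℝ) * Real.sqrt μ₀ := by
    intro a
    calc Real.sqrt d₁ * (∑ j, |U a j|)
        ≤ Real.sqrt d₁ * (Real.sqrt r * Real.sqrt (μ₀ * r / d₁)) :=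
          mul_le_mul_of_nonneg_left (hUabs a) (Real.sqrt_nonneg _)
      _ = Real.sqrt r * (Real.sqrt d₁ * Real.sqrt (μ₀ * r / d₁)) := by ring
      _ = Real.sqrt r * Real.sqrt (μ₀ * r) := by rw [hkey2]
      _ = (r:ℝ) * Real.sqrt μ₀ := hkey1
  have hV1 : ∀ b, Real.sqrt d₂ * (∑ j, |V b j|) ≤ (r:ℝ) * Real.sqrt μ₀ := by
    intro b
    calc Real.sqrt d₂ * (∑ j, |V b j|)
        ≤ Real.sqrt d₂ * (Real.sqrt r * Real.sqrt (μ₀ * r / d₂)) :=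
          mul_le_mul_of_nonneg_left (hVabs b) (Real.sqrt_nonneg _)
      _ = Real.sqrt r * (Real.sqrt d₂ * Real.sqrt (μ₀ * r / d₂)) := by ring
      _ = Real.sqrt r * Real.sqrt (μ₀ * r) := by rw [hkey2']
      _ = (r:ℝ) * Real.sqrt μ₀ := hkey1
  -- entry bounds of projectors
  have hPUent : ∀ a c, |(U * Uᵀ) a c| ≤ μ₀ * r / d₁ := by
    intro a c
    calc |(U * Uᵀ) a c| = |∑ j, U a j * U c j| := by
          simp [Matrix.mul_apply, Matrix.transpose_apply]
      _ ≤ Real.sqrt (∑ j, (U a j)^2) * Real.sqrt (∑ j, (U c j)^2) := abs_sum_mul_le _ _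
      _ ≤ Real.sqrt (μ₀ * r / d₁) * Real.sqrt (μ₀ * r / d₁) :=
          mul_le_mul (Real.sqrt_le_sqrt (hsupU a)) (Real.sqrt_le_sqrt (hsupU c))
            (Real.sqrt_nonneg _) (Real.sqrt_nonneg _)
      _ = μ₀ * r / d₁ := Real.mul_self_sqrt (by positivity)
  have hPVent : ∀ a c, |(V * Vᵀ) a c| ≤ μ₀ * r / d₂ := by
    intro a c
    calc |(V * Vᵀ) a c| = |∑ j, V a j * V c j| := by
          simp [Matrix.mul_apply, Matrix.transpose_apply]
      _ ≤ Real.sqrt (∑ j, (V a j)^2) * Real.sqrt (∑ j, (V c j)^2) := abs_sum_mul_le _ _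
      _ ≤ Real.sqrt (μ₀ * r / d₂) * Real.sqrt (μ₀ * r / d₂) :=
          mul_le_mul (Real.sqrt_le_sqrt (hsupV a)) (Real.sqrt_le_sqrt (hsupV c))
            (Real.sqrt_nonneg _) (Real.sqrt_nonneg _)
      _ = μ₀ * r / d₂ := Real.mul_self_sqrt (by positivity)
  have hPUrow : ∀ a, ∑ c, |(U * Uᵀ) a c| ≤ μ₀ * r := by
    intro a
    calc ∑ c, |(U * Uᵀ) a c| ≤ ∑ _c : Fin d₁, (μ₀ * r / d₁) :=
          Finset.sum_le_sum (fun c _ => hPUent a c)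
      _ = d₁ * (μ₀ * r / d₁) := by
          rw [Finset.sum_const, Finset.card_univ, Fintype.card_fin, nsmul_eq_mul]
      _ = μ₀ * r := by field_simp
  have hPVrow : ∀ a, ∑ c, |(V * Vᵀ) a c| ≤ μ₀ * r := by
    intro a
    calc ∑ c, |(V * Vᵀ) a c| ≤ ∑ _c : Fin d₂, (μ₀ * r / d₂) :=
          Finset.sum_le_sum (fun c _ => hPVent a c)
      _ = d₂ * (μ₀ * r / d₂) := by
          rw [Finset.sum_const, Finset.card_univ, Fintype.card_fin, nsmul_eq_mul]
      _ = μ₀ * r := by field_simp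
  -- norm transfers
  have hτrow : Real.sqrt d₁ * matInfNorm E ≤ Real.sqrt d₂ * τ₀ := by
    have h : Real.sqrt ((d₁:ℝ)/d₂) * matInfNorm E ≤ τ₀ := hτ₀ ▸ le_max_left _ _
    rw [Real.sqrt_div (le_of_lt hd1R), div_mul_eq_mul_div, div_le_iff₀ hs2] at h
    linarith [h]
  have hτcol : Real.sqrt d₂ * matOneNorm E ≤ Real.sqrt d₁ * τ₀ := by
    have h : Real.sqrt ((d₂:ℝ)/d₁) * matOneNorm E ≤ τ₀ := hτ₀ ▸ le_max_right _ _
    rw [Real.sqrt_div (le_of_lt hd2R), div_mul_eq_mul_div, div_le_iff₀ hs1] at h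
    linarith [h]
  have hεrow : Real.sqrt d₁ * matInfNorm (A - Ar) ≤ Real.sqrt d₂ * ε₀ := by
    have h : Real.sqrt ((d₁:ℝ)/d₂) * matInfNorm (A - Ar) ≤ ε₀ := hε₀ ▸ le_max_left _ _
    rw [Real.sqrt_div (le_of_lt hd1R), div_mul_eq_mul_div, div_le_iff₀ hs2] at h
    linarith [h]
  have hεcol : Real.sqrt d₂ * matOneNorm (A - Ar) ≤ Real.sqrt d₁ * ε₀ := by
    have h : Real.sqrt ((d₂:ℝ)/d₁) * matOneNorm (A - Ar) ≤ ε₀ := hε₀ ▸ le_max_right _ _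
    rw [Real.sqrt_div (le_of_lt hd2R), div_mul_eq_mul_div, div_le_iff₀ hs1] at h
    linarith [h]
  set F : Matrix (Fin d₁) (Fin d₂) ℝ :=
    (A - Ar) + (E - U * Uᵀ * E - E * (V * Vᵀ) + U * Uᵀ * E * (V * Vᵀ)) with hFdef
  have habs5 : ∀ x y z w v : ℝ, |x + (y - z - w + v)| ≤ |x| + |y| + |z| + |w| + |v| := by
    intro x y z w v
    have h1 := abs_add_le x (y - z - w + v)
    have h2 := abs_add_le (y - z - w) v
    have h3 := abs_add_le (y - z) (-w)
    have h4 := abs_add_le y (-z)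
    rw [abs_neg] at h3 h4
    rw [← sub_eq_add_neg] at h3 h4
    linarith
  have hFentry : ∀ a b, |F a b| ≤ |(A - Ar) a b| + |E a b| + |(U * Uᵀ * E) a b|
      + |(E * (V * Vᵀ)) a b| + |(U * Uᵀ * E * (V * Vᵀ)) a b| := by
    intro a b
    rw [hFdef]
    simp only [Matrix.add_apply, Matrix.sub_apply]
    exact habs5 _ _ _ _ _
  -- term 5
  have hYent : ∀ (j : Fin r) (b : Fin d₂), |((Uᵀ * (E * V)) * Vᵀ) j b| ≤ κ₀ * ∑ l, |V b l| := by
    intro j b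
    rw [Matrix.mul_apply]
    refine (Finset.abs_sum_le_sum_abs _ _).trans ?_
    rw [Finset.mul_sum]
    apply Finset.sum_le_sum
    intro l _
    rw [abs_mul, Matrix.transpose_apply]
    exact mul_le_mul_of_nonneg_right (hG j l) (abs_nonneg _)
  have hM5ent : ∀ a b, |(U * Uᵀ * E * (V * Vᵀ)) a b|
      ≤ (∑ j, |U a j|) * (κ₀ * ∑ l, |V b l|) := by
    intro a b
    have hMassoc : U * Uᵀ * E * (V * Vᵀ) = U * ((Uᵀ * (E * V)) * Vᵀ) := by
      simp only [Matrix.mul_assoc]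
    rw [hMassoc, Matrix.mul_apply]
    refine (Finset.abs_sum_le_sum_abs _ _).trans ?_
    rw [Finset.sum_mul]
    apply Finset.sum_le_sum
    intro j _
    rw [abs_mul]
    exact mul_le_mul_of_nonneg_left (hYent j b) (abs_nonneg _)
  have hVtot : ∑ b, ∑ l, |V b l| ≤ Real.sqrt d₂ * ((r:ℝ) * Real.sqrt μ₀) := by
    calc ∑ b, ∑ l, |V b l| ≤ ∑ _b : Fin d₂, (Real.sqrt r * Real.sqrt (μ₀ * r / d₂)) :=
          Finset.sum_le_sum (fun b _ => hVabs b)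
      _ = (d₂:ℝ) * (Real.sqrt r * Real.sqrt (μ₀ * r / d₂)) := by
          rw [Finset.sum_const, Finset.card_univ, Fintype.card_fin, nsmul_eq_mul]
      _ = Real.sqrt r * ((d₂:ℝ) * Real.sqrt (μ₀ * r / d₂)) := by ring
      _ = Real.sqrt r * (Real.sqrt d₂ * Real.sqrt (μ₀ * r)) := by rw [hkey3]
      _ = Real.sqrt d₂ * (Real.sqrt r * Real.sqrt (μ₀ * r)) := by ring
      _ = Real.sqrt d₂ * ((r:ℝ) * Real.sqrt μ₀) := by rw [hkey1]
  have hUtot : ∑ a, ∑ j, |U a j| ≤ Real.sqrt d₁ * ((r:ℝ) * Real.sqrt μ₀) := by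
    calc ∑ a, ∑ j, |U a j| ≤ ∑ _a : Fin d₁, (Real.sqrt r * Real.sqrt (μ₀ * r / d₁)) :=
          Finset.sum_le_sum (fun a _ => hUabs a)
      _ = (d₁:ℝ) * (Real.sqrt r * Real.sqrt (μ₀ * r / d₁)) := by
          rw [Finset.sum_const, Finset.card_univ, Fintype.card_fin, nsmul_eq_mul]
      _ = Real.sqrt r * ((d₁:ℝ) * Real.sqrt (μ₀ * r / d₁)) := by ring
      _ = Real.sqrt r * (Real.sqrt d₁ * Real.sqrt (μ₀ * r)) := by rw [hkey3']
      _ = Real.sqrt d₁ * (Real.sqrt r * Real.sqrt (μ₀ * r)) := by ring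
      _ = Real.sqrt d₁ * ((r:ℝ) * Real.sqrt μ₀) := by rw [hkey1]
  have hrow5 : ∀ a, Real.sqrt d₁ * ∑ b, |(U * Uᵀ * E * (V * Vᵀ)) a b|
      ≤ Real.sqrt d₂ * ((r:ℝ)^2 * μ₀ * κ₀) := by
    intro a
    have h1 : ∑ b, |(U * Uᵀ * E * (V * Vᵀ)) a b|
        ≤ (∑ j, |U a j|) * (κ₀ * ∑ b, ∑ l, |V b l|) := by
      calc ∑ b, |(U * Uᵀ * E * (V * Vᵀ)) a b|
          ≤ ∑ b, (∑ j, |U a j|) * (κ₀ * ∑ l, |V b l|) :=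
            Finset.sum_le_sum (fun b _ => hM5ent a b)
        _ = (∑ j, |U a j|) * (κ₀ * ∑ b, ∑ l, |V b l|) := by
            rw [← Finset.mul_sum, ← Finset.mul_sum]
    calc Real.sqrt d₁ * ∑ b, |(U * Uᵀ * E * (V * Vᵀ)) a b|
        ≤ Real.sqrt d₁ * ((∑ j, |U a j|) * (κ₀ * ∑ b, ∑ l, |V b l|)) :=
          mul_le_mul_of_nonneg_left h1 (Real.sqrt_nonneg _)
      _ = (Real.sqrt d₁ * ∑ j, |U a j|) * (κ₀ * ∑ b, ∑ l, |V b l|) := by ring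
      _ ≤ ((r:ℝ) * Real.sqrt μ₀) * (κ₀ * (Real.sqrt d₂ * ((r:ℝ) * Real.sqrt μ₀))) := by
          apply mul_le_mul (hU1 a) (mul_le_mul_of_nonneg_left hVtot hκ0)
          · exact mul_nonneg hκ0 (Finset.sum_nonneg fun _ _ =>
              Finset.sum_nonneg fun _ _ => abs_nonneg _)
          · positivity
      _ = Real.sqrt d₂ * ((r:ℝ)^2 * μ₀ * κ₀) := by
          generalize hs : Real.sqrt μ₀ = s
          rw [show μ₀ = s * s from by rw [← hs]; exact hμμ.symm]
          ring
  have hcol5 : ∀ b, Real.sqrt d₂ * ∑ a, |(U * Uᵀ * E * (V * Vᵀ)) a b|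
      ≤ Real.sqrt d₁ * ((r:ℝ)^2 * μ₀ * κ₀) := by
    intro b
    have h1 : ∑ a, |(U * Uᵀ * E * (V * Vᵀ)) a b|
        ≤ (∑ a, ∑ j, |U a j|) * (κ₀ * ∑ l, |V b l|) := by
      calc ∑ a, |(U * Uᵀ * E * (V * Vᵀ)) a b|
          ≤ ∑ a, (∑ j, |U a j|) * (κ₀ * ∑ l, |V b l|) :=
            Finset.sum_le_sum (fun a _ => hM5ent a b)
        _ = (∑ a, ∑ j, |U a j|) * (κ₀ * ∑ l, |V b l|) := by
            rw [Finset.sum_mul]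
    calc Real.sqrt d₂ * ∑ a, |(U * Uᵀ * E * (V * Vᵀ)) a b|
        ≤ Real.sqrt d₂ * ((∑ a, ∑ j, |U a j|) * (κ₀ * ∑ l, |V b l|)) :=
          mul_le_mul_of_nonneg_left h1 (Real.sqrt_nonneg _)
      _ = (∑ a, ∑ j, |U a j|) * (κ₀ * (Real.sqrt d₂ * ∑ l, |V b l|)) := by ring
      _ ≤ (Real.sqrt d₁ * ((r:ℝ) * Real.sqrt μ₀)) * (κ₀ * ((r:ℝ) * Real.sqrt μ₀)) := by
          apply mul_le_mul hUtot (mul_le_mul_of_nonneg_left (hV1 b) hκ0)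
          · exact mul_nonneg hκ0 (mul_nonneg (Real.sqrt_nonneg _)
              (Finset.sum_nonneg fun _ _ => abs_nonneg _))
          · positivity
      _ = Real.sqrt d₁ * ((r:ℝ)^2 * μ₀ * κ₀) := by
          generalize hs : Real.sqrt μ₀ = s
          rw [show μ₀ = s * s from by rw [← hs]; exact hμμ.symm]
          ring
  -- terms 3 and 4
  have hrow3 : ∀ a, ∑ b, |(U * Uᵀ * E) a b| ≤ μ₀ * r * matInfNorm E := by
    intro a
    refine (rowsum_mul_bound (U * Uᵀ) E a).trans ?_
    calc ∑ c, |(U * Uᵀ) a c| * ∑ b, |E c b|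
        ≤ ∑ c, |(U * Uᵀ) a c| * matInfNorm E :=
          Finset.sum_le_sum (fun c _ =>
            mul_le_mul_of_nonneg_left (rowsum_le_matInfNorm E c) (abs_nonneg _))
      _ = (∑ c, |(U * Uᵀ) a c|) * matInfNorm E := by rw [Finset.sum_mul]
      _ ≤ μ₀ * r * matInfNorm E :=
          mul_le_mul_of_nonneg_right (hPUrow a) (matInfNorm_nonneg E)
  have hrow4 : ∀ a, ∑ b, |(E * (V * Vᵀ)) a b| ≤ matInfNorm E * (μ₀ * r) := by
    intro a
    refine (rowsum_mul_bound E (V * Vᵀ) a).trans ?_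
    calc ∑ c, |E a c| * ∑ b, |(V * Vᵀ) c b|
        ≤ ∑ c, |E a c| * (μ₀ * r) :=
          Finset.sum_le_sum (fun c _ =>
            mul_le_mul_of_nonneg_left (hPVrow c) (abs_nonneg _))
      _ = (∑ c, |E a c|) * (μ₀ * r) := by rw [Finset.sum_mul]
      _ ≤ matInfNorm E * (μ₀ * r) :=
          mul_le_mul_of_nonneg_right (rowsum_le_matInfNorm E a) (by positivity)
  have hPUcol : ∀ c, ∑ a, |(U * Uᵀ) a c| ≤ μ₀ * r := by
    intro c
    calc ∑ a, |(U * Uᵀ) a c| ≤ ∑ _a : Fin d₁, (μ₀ * r / d₁) :=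
          Finset.sum_le_sum (fun a _ => hPUent a c)
      _ = (d₁:ℝ) * (μ₀ * r / d₁) := by
          rw [Finset.sum_const, Finset.card_univ, Fintype.card_fin, nsmul_eq_mul]
      _ = μ₀ * r := by field_simp
  have hPVcol : ∀ c, ∑ a, |(V * Vᵀ) a c| ≤ μ₀ * r := by
    intro c
    calc ∑ a, |(V * Vᵀ) a c| ≤ ∑ _a : Fin d₂, (μ₀ * r / d₂) :=
          Finset.sum_le_sum (fun a _ => hPVent a c)
      _ = (d₂:ℝ) * (μ₀ * r / d₂) := by
          rw [Finset.sum_const, Finset.card_univ, Fintype.card_fin, nsmul_eq_mul]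
      _ = μ₀ * r := by field_simp
  have hcol3 : ∀ b, ∑ a, |(U * Uᵀ * E) a b| ≤ μ₀ * r * matOneNorm E := by
    intro b
    refine (colsum_mul_bound (U * Uᵀ) E b).trans ?_
    calc ∑ c, (∑ a, |(U * Uᵀ) a c|) * |E c b|
        ≤ ∑ c, (μ₀ * r) * |E c b| :=
          Finset.sum_le_sum (fun c _ =>
            mul_le_mul_of_nonneg_right (hPUcol c) (abs_nonneg _))
      _ = (μ₀ * r) * ∑ c, |E c b| := by rw [Finset.mul_sum]
      _ ≤ μ₀ * r * matOneNorm E :=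
          mul_le_mul_of_nonneg_left (colsum_le_matOneNorm E b) (by positivity)
  have hcol4 : ∀ b, ∑ a, |(E * (V * Vᵀ)) a b| ≤ matOneNorm E * (μ₀ * r) := by
    intro b
    refine (colsum_mul_bound E (V * Vᵀ) b).trans ?_
    calc ∑ c, (∑ a, |E a c|) * |(V * Vᵀ) c b|
        ≤ ∑ c, matOneNorm E * |(V * Vᵀ) c b| :=
          Finset.sum_le_sum (fun c _ =>
            mul_le_mul_of_nonneg_right (colsum_le_matOneNorm E c) (abs_nonneg _))
      _ = matOneNorm E * ∑ c, |(V * Vᵀ) c b| := by rw [Finset.mul_sum]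
      _ ≤ matOneNorm E * (μ₀ * r) :=
          mul_le_mul_of_nonneg_left (hPVcol b) (matOneNorm_nonneg E)
  -- assembled weighted row/column bounds for F
  have hrowF : ∀ a, Real.sqrt d₁ * ∑ b, |F a b|
      ≤ Real.sqrt d₂ * (ε₀ + (1 + 2*(r:ℝ)*μ₀)*τ₀ + (r:ℝ)^2*μ₀*κ₀) := by
    intro a
    have hsum : ∑ b, |F a b| ≤ (∑ b, |(A - Ar) a b|) + (∑ b, |E a b|)
        + (∑ b, |(U * Uᵀ * E) a b|) + (∑ b, |(E * (V * Vᵀ)) a b|)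
        + (∑ b, |(U * Uᵀ * E * (V * Vᵀ)) a b|) := by
      calc ∑ b, |F a b| ≤ ∑ b, (|(A - Ar) a b| + |E a b| + |(U * Uᵀ * E) a b|
          + |(E * (V * Vᵀ)) a b| + |(U * Uᵀ * E * (V * Vᵀ)) a b|) :=
            Finset.sum_le_sum (fun b _ => hFentry a b)
        _ = _ := by rw [Finset.sum_add_distrib, Finset.sum_add_distrib,
              Finset.sum_add_distrib, Finset.sum_add_distrib]
    have hmul := mul_le_mul_of_nonneg_left hsum (Real.sqrt_nonneg (d₁:ℝ))
    rw [mul_add, mul_add, mul_add, mul_add] at hmul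
    have h1 : Real.sqrt d₁ * ∑ b, |(A - Ar) a b| ≤ Real.sqrt d₂ * ε₀ :=
      (mul_le_mul_of_nonneg_left (rowsum_le_matInfNorm (A - Ar) a)
        (Real.sqrt_nonneg _)).trans hεrow
    have h2 : Real.sqrt d₁ * ∑ b, |E a b| ≤ Real.sqrt d₂ * τ₀ :=
      (mul_le_mul_of_nonneg_left (rowsum_le_matInfNorm E a)
        (Real.sqrt_nonneg _)).trans hτrow
    have h3 : Real.sqrt d₁ * ∑ b, |(U * Uᵀ * E) a b| ≤ (μ₀ * r) * (Real.sqrt d₂ * τ₀) := by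
      calc Real.sqrt d₁ * ∑ b, |(U * Uᵀ * E) a b|
          ≤ Real.sqrt d₁ * (μ₀ * r * matInfNorm E) :=
            mul_le_mul_of_nonneg_left (hrow3 a) (Real.sqrt_nonneg _)
        _ = (μ₀ * r) * (Real.sqrt d₁ * matInfNorm E) := by ring
        _ ≤ (μ₀ * r) * (Real.sqrt d₂ * τ₀) :=
            mul_le_mul_of_nonneg_left hτrow (by positivity)
    have h4 : Real.sqrt d₁ * ∑ b, |(E * (V * Vᵀ)) a b| ≤ (μ₀ * r) * (Real.sqrt d₂ * τ₀) := by
      calc Real.sqrt d₁ * ∑ b, |(E * (V * Vᵀ)) a b|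
          ≤ Real.sqrt d₁ * (matInfNorm E * (μ₀ * r)) :=
            mul_le_mul_of_nonneg_left (hrow4 a) (Real.sqrt_nonneg _)
        _ = (μ₀ * r) * (Real.sqrt d₁ * matInfNorm E) := by ring
        _ ≤ (μ₀ * r) * (Real.sqrt d₂ * τ₀) :=
            mul_le_mul_of_nonneg_left hτrow (by positivity)
    have h5 := hrow5 a
    have hfinal : Real.sqrt d₂ * ε₀ + Real.sqrt d₂ * τ₀ + (μ₀ * r) * (Real.sqrt d₂ * τ₀)
        + (μ₀ * r) * (Real.sqrt d₂ * τ₀) + Real.sqrt d₂ * ((r:ℝ)^2*μ₀*κ₀)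
        = Real.sqrt d₂ * (ε₀ + (1 + 2*(r:ℝ)*μ₀)*τ₀ + (r:ℝ)^2*μ₀*κ₀) := by ring
    linarith
  have hcolF : ∀ b, Real.sqrt d₂ * ∑ a, |F a b|
      ≤ Real.sqrt d₁ * (ε₀ + (1 + 2*(r:ℝ)*μ₀)*τ₀ + (r:ℝ)^2*μ₀*κ₀) := by
    intro b
    have hsum : ∑ a, |F a b| ≤ (∑ a, |(A - Ar) a b|) + (∑ a, |E a b|)
        + (∑ a, |(U * Uᵀ * E) a b|) + (∑ a, |(E * (V * Vᵀ)) a b|)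
        + (∑ a, |(U * Uᵀ * E * (V * Vᵀ)) a b|) := by
      calc ∑ a, |F a b| ≤ ∑ a, (|(A - Ar) a b| + |E a b| + |(U * Uᵀ * E) a b|
          + |(E * (V * Vᵀ)) a b| + |(U * Uᵀ * E * (V * Vᵀ)) a b|) :=
            Finset.sum_le_sum (fun a _ => hFentry a b)
        _ = _ := by rw [Finset.sum_add_distrib, Finset.sum_add_distrib,
              Finset.sum_add_distrib, Finset.sum_add_distrib]
    have hmul := mul_le_mul_of_nonneg_left hsum (Real.sqrt_nonneg (d₂:ℝ))
    rw [mul_add, mul_add, mul_add, mul_add] at hmul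
    have h1 : Real.sqrt d₂ * ∑ a, |(A - Ar) a b| ≤ Real.sqrt d₁ * ε₀ :=
      (mul_le_mul_of_nonneg_left (colsum_le_matOneNorm (A - Ar) b)
        (Real.sqrt_nonneg _)).trans hεcol
    have h2 : Real.sqrt d₂ * ∑ a, |E a b| ≤ Real.sqrt d₁ * τ₀ :=
      (mul_le_mul_of_nonneg_left (colsum_le_matOneNorm E b)
        (Real.sqrt_nonneg _)).trans hτcol
    have h3 : Real.sqrt d₂ * ∑ a, |(U * Uᵀ * E) a b| ≤ (μ₀ * r) * (Real.sqrt d₁ * τ₀) := by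
      calc Real.sqrt d₂ * ∑ a, |(U * Uᵀ * E) a b|
          ≤ Real.sqrt d₂ * (μ₀ * r * matOneNorm E) :=
            mul_le_mul_of_nonneg_left (hcol3 b) (Real.sqrt_nonneg _)
        _ = (μ₀ * r) * (Real.sqrt d₂ * matOneNorm E) := by ring
        _ ≤ (μ₀ * r) * (Real.sqrt d₁ * τ₀) :=
            mul_le_mul_of_nonneg_left hτcol (by positivity)
    have h4 : Real.sqrt d₂ * ∑ a, |(E * (V * Vᵀ)) a b| ≤ (μ₀ * r) * (Real.sqrt d₁ * τ₀) := by
      calc Real.sqrt d₂ * ∑ a, |(E * (V * Vᵀ)) a b|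
          ≤ Real.sqrt d₂ * (matOneNorm E * (μ₀ * r)) :=
            mul_le_mul_of_nonneg_left (hcol4 b) (Real.sqrt_nonneg _)
        _ = (μ₀ * r) * (Real.sqrt d₂ * matOneNorm E) := by ring
        _ ≤ (μ₀ * r) * (Real.sqrt d₁ * τ₀) :=
            mul_le_mul_of_nonneg_left hτcol (by positivity)
    have h5 := hcol5 b
    have hfinal : Real.sqrt d₁ * ε₀ + Real.sqrt d₁ * τ₀ + (μ₀ * r) * (Real.sqrt d₁ * τ₀)
        + (μ₀ * r) * (Real.sqrt d₁ * τ₀) + Real.sqrt d₁ * ((r:ℝ)^2*μ₀*κ₀)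
        = Real.sqrt d₁ * (ε₀ + (1 + 2*(r:ℝ)*μ₀)*τ₀ + (r:ℝ)^2*μ₀*κ₀) := by ring
    linarith
  -- final bound constant
  have hB : ∀ i₀ : Fin d₁ ⊕ Fin d₂,
      (Sum.elim (fun _ : Fin d₁ => Real.sqrt d₁) (fun _ : Fin d₂ => Real.sqrt d₂) i₀) *
        ∑ k, |L₂d i₀ k| *
          (Sum.elim (fun _ : Fin d₁ => Real.sqrt d₁) (fun _ : Fin d₂ => Real.sqrt d₂) k)⁻¹
      ≤ ε₀ + (1 + 2*(r:ℝ)*μ₀)*τ₀ + (r:ℝ)^2*μ₀*κ₀ := by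
    intro i₀
    rcases i₀ with a | b
    · have hsplit : ∑ k, |L₂d (Sum.inl a) k| *
          (Sum.elim (fun _ : Fin d₁ => Real.sqrt d₁) (fun _ : Fin d₂ => Real.sqrt d₂) k)⁻¹
          = (∑ c : Fin d₁, |L₂d (Sum.inl a) (Sum.inl c)| * (Real.sqrt d₁)⁻¹)
            + ∑ b : Fin d₂, |L₂d (Sum.inl a) (Sum.inr b)| * (Real.sqrt d₂)⁻¹ := by
        rw [Fintype.sum_sum_type]
        simp
      have hz : ∀ c : Fin d₁, L₂d (Sum.inl a) (Sum.inl c) = 0 := by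
        intro c; rw [hL2]; rfl
      have hf : ∀ b : Fin d₂, L₂d (Sum.inl a) (Sum.inr b) = F a b := by
        intro b; rw [hL2]; rfl
      simp only [Sum.elim_inl, hsplit, hz, hf, abs_zero, zero_mul, Finset.sum_const_zero,
        zero_add]
      have hS : ∑ b : Fin d₂, |F a b| * (Real.sqrt d₂)⁻¹
          = (∑ b : Fin d₂, |F a b|) * (Real.sqrt d₂)⁻¹ := by rw [Finset.sum_mul]
      rw [hS]
      have h1 : Real.sqrt d₁ * ((∑ b, |F a b|) * (Real.sqrt d₂)⁻¹)
          = (Real.sqrt d₁ * ∑ b, |F a b|) * (Real.sqrt d₂)⁻¹ := by ring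
      rw [h1]
      calc (Real.sqrt d₁ * ∑ b, |F a b|) * (Real.sqrt d₂)⁻¹
          ≤ (Real.sqrt d₂ * (ε₀ + (1 + 2*(r:ℝ)*μ₀)*τ₀ + (r:ℝ)^2*μ₀*κ₀)) * (Real.sqrt d₂)⁻¹ :=
            mul_le_mul_of_nonneg_right (hrowF a) (inv_nonneg.mpr (Real.sqrt_nonneg _))
        _ = ε₀ + (1 + 2*(r:ℝ)*μ₀)*τ₀ + (r:ℝ)^2*μ₀*κ₀ := by
            rw [mul_comm (Real.sqrt (d₂:ℝ)), mul_assoc, mul_inv_cancel₀ (ne_of_gt hs2), mul_one]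
    · have hsplit : ∑ k, |L₂d (Sum.inr b) k| *
          (Sum.elim (fun _ : Fin d₁ => Real.sqrt d₁) (fun _ : Fin d₂ => Real.sqrt d₂) k)⁻¹
          = (∑ c : Fin d₁, |L₂d (Sum.inr b) (Sum.inl c)| * (Real.sqrt d₁)⁻¹)
            + ∑ b' : Fin d₂, |L₂d (Sum.inr b) (Sum.inr b')| * (Real.sqrt d₂)⁻¹ := by
        rw [Fintype.sum_sum_type]
        simp
      have hz : ∀ b' : Fin d₂, L₂d (Sum.inr b) (Sum.inr b') = 0 := by
        intro b'; rw [hL2]; rfl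
      have hf : ∀ c : Fin d₁, L₂d (Sum.inr b) (Sum.inl c) = F c b := by
        intro c; rw [hL2]; rfl
      simp only [Sum.elim_inr, hsplit, hz, hf, abs_zero, zero_mul, Finset.sum_const_zero,
        add_zero]
      have hS : ∑ c : Fin d₁, |F c b| * (Real.sqrt d₁)⁻¹
          = (∑ c : Fin d₁, |F c b|) * (Real.sqrt d₁)⁻¹ := by rw [Finset.sum_mul]
      rw [hS]
      have h1 : Real.sqrt d₂ * ((∑ c, |F c b|) * (Real.sqrt d₁)⁻¹)
          = (Real.sqrt d₂ * ∑ c, |F c b|) * (Real.sqrt d₁)⁻¹ := by ring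
      rw [h1]
      calc (Real.sqrt d₂ * ∑ c, |F c b|) * (Real.sqrt d₁)⁻¹
          ≤ (Real.sqrt d₁ * (ε₀ + (1 + 2*(r:ℝ)*μ₀)*τ₀ + (r:ℝ)^2*μ₀*κ₀)) * (Real.sqrt d₁)⁻¹ :=
            mul_le_mul_of_nonneg_right (hcolF b) (inv_nonneg.mpr (Real.sqrt_nonneg _))
        _ = ε₀ + (1 + 2*(r:ℝ)*μ₀)*τ₀ + (r:ℝ)^2*μ₀*κ₀ := by
            rw [mul_comm (Real.sqrt (d₁:ℝ)), mul_assoc, mul_inv_cancel₀ (ne_of_gt hs1), mul_one]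
  have hwnn : ∀ i : Fin d₁ ⊕ Fin d₂,
      0 ≤ Sum.elim (fun _ : Fin d₁ => Real.sqrt d₁) (fun _ : Fin d₂ => Real.sqrt d₂) i := by
    rintro (i | i) <;> exact Real.sqrt_nonneg _
  have hwpos : ∀ i : Fin d₁ ⊕ Fin d₂,
      0 < Sum.elim (fun _ : Fin d₁ => Real.sqrt d₁) (fun _ : Fin d₂ => Real.sqrt d₂) i := by
    rintro (i | i) <;> assumption
  have hwmax_ge : ∀ (M : Matrix (Fin d₁ ⊕ Fin d₂) (Fin r ⊕ Fin r) ℝ) i j,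
      (Sum.elim (fun _ : Fin d₁ => Real.sqrt d₁) (fun _ : Fin d₂ => Real.sqrt d₂) i) * |M i j|
        ≤ wMaxNorm M := by
    intro M i j
    unfold wMaxNorm
    have h := abs_le_matMaxNorm (Matrix.of fun i j =>
      (Sum.elim (fun _ : Fin d₁ => Real.sqrt d₁) (fun _ : Fin d₂ => Real.sqrt d₂) i) * M i j) i j
    rwa [Matrix.of_apply, abs_mul, abs_of_nonneg (hwnn i)] at h
  have hLamabs : ∀ j : Fin r ⊕ Fin r,
      σ (Fin.castLE hrm ⟨r - 1, by omega⟩) ≤ |Lam₁d j j| := by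
    intro j
    rw [hLam₁d, Matrix.diagonal_apply_eq]
    rcases j with k | k
    · simp only [Sum.elim_inl]
      rw [abs_of_nonneg (hσpos _)]
      exact hσr_le k
    · simp only [Sum.elim_inr]
      rw [abs_neg, abs_of_nonneg (hσpos _)]
      exact hσr_le k
  constructor
  · -- Part 1
    intro Q hQ
    obtain ⟨⟨i₀, j₀⟩, hmax⟩ := Finite.exists_max
      (fun p : (Fin d₁ ⊕ Fin d₂) × (Fin r ⊕ Fin r) =>
        (Sum.elim (fun _ : Fin d₁ => Real.sqrt d₁) (fun _ : Fin d₂ => Real.sqrt d₂) p.1)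
          * |Q p.1 p.2|)
    set w : (Fin d₁ ⊕ Fin d₂) → ℝ :=
      Sum.elim (fun _ : Fin d₁ => Real.sqrt d₁) (fun _ : Fin d₂ => Real.sqrt d₂) with hwdef
    have h2 : wMaxNorm Q ≤ w i₀ * |Q i₀ j₀| := by
      unfold wMaxNorm matMaxNorm
      apply ciSup_le
      intro i
      apply ciSup_le
      intro j
      rw [Matrix.of_apply, abs_mul, abs_of_nonneg (hwnn i)]
      exact hmax (i, j)
    have hQattain : w i₀ * |Q i₀ j₀| = 1 := le_antisymm (hQ ▸ hwmax_ge Q i₀ j₀) (hQ ▸ h2)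
    have hQle : ∀ i j, w i * |Q i j| ≤ 1 := fun i j => (hmax (i, j)).trans (le_of_eq hQattain)
    have hQinv : ∀ k j, |Q k j| ≤ (w k)⁻¹ := by
      intro k j
      rw [← one_div, le_div_iff₀ (hwpos k), mul_comm]
      exact hQle k j
    -- entry id
    have hdiagsum : ∑ k, Q i₀ k * Lam₁d k j₀ = Q i₀ j₀ * Lam₁d j₀ j₀ := by
      apply Finset.sum_eq_single j₀
      · intro k _ hkj
        rw [hLam₁d, Matrix.diagonal_apply_ne _ hkj, mul_zero]
      · intro h
        exact absurd (Finset.mem_univ j₀) h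
    have hentry : (Q * L₁d - L₂d * Q) i₀ j₀ = Q i₀ j₀ * Lam₁d j₀ j₀
        + (∑ k, Q i₀ k * (Vdᵀ * Ed * Vd) k j₀) - ∑ k, L₂d i₀ k * Q k j₀ := by
      rw [Matrix.sub_apply, Matrix.mul_apply, Matrix.mul_apply, hL₁d]
      simp only [Matrix.add_apply, mul_add, Finset.sum_add_distrib]
      rw [hdiagsum]
    -- term bounds
    have hbterm : w i₀ * |∑ k, Q i₀ k * (Vdᵀ * Ed * Vd) k j₀| ≤ 2*(r:ℝ)*κ₀ := by
      calc w i₀ * |∑ k, Q i₀ k * (Vdᵀ * Ed * Vd) k j₀|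
          ≤ w i₀ * ∑ k, |Q i₀ k| * |(Vdᵀ * Ed * Vd) k j₀| := by
            apply mul_le_mul_of_nonneg_left _ (hwnn i₀)
            refine (Finset.abs_sum_le_sum_abs _ _).trans (le_of_eq ?_)
            exact Finset.sum_congr rfl (fun k _ => abs_mul _ _)
        _ = ∑ k, (w i₀ * |Q i₀ k|) * |(Vdᵀ * Ed * Vd) k j₀| := by
            rw [Finset.mul_sum]
            exact Finset.sum_congr rfl (fun k _ => by ring)
        _ ≤ ∑ _k : Fin r ⊕ Fin r, 1 * κ₀ :=
            Finset.sum_le_sum (fun k _ => mul_le_mul (hQle i₀ k) (hE11 k j₀)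
              (abs_nonneg _) zero_le_one)
        _ = 2*(r:ℝ)*κ₀ := by
            rw [Finset.sum_const, Finset.card_univ, Fintype.card_sum, Fintype.card_fin,
              nsmul_eq_mul, one_mul]
            push_cast
            ring
    have hcterm : w i₀ * |∑ k, L₂d i₀ k * Q k j₀|
        ≤ ε₀ + (1 + 2*(r:ℝ)*μ₀)*τ₀ + (r:ℝ)^2*μ₀*κ₀ := by
      refine le_trans ?_ (hB i₀)
      apply mul_le_mul_of_nonneg_left _ (hwnn i₀)
      refine (Finset.abs_sum_le_sum_abs _ _).trans ?_
      apply Finset.sum_le_sum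
      intro k _
      rw [abs_mul]
      exact mul_le_mul_of_nonneg_left (hQinv k j₀) (abs_nonneg _)
    -- triangle inequality
    have htri : |Q i₀ j₀ * Lam₁d j₀ j₀| ≤ |(Q * L₁d - L₂d * Q) i₀ j₀|
        + |∑ k, Q i₀ k * (Vdᵀ * Ed * Vd) k j₀| + |∑ k, L₂d i₀ k * Q k j₀| := by
      rw [hentry]
      set a := Q i₀ j₀ * Lam₁d j₀ j₀
      set b := ∑ k, Q i₀ k * (Vdᵀ * Ed * Vd) k j₀
      set c := ∑ k, L₂d i₀ k * Q k j₀
      have hid : a = (a + b - c) + (c - b) := by ring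
      calc |a| = |(a + b - c) + (c - b)| := by rw [← hid]
        _ ≤ |a + b - c| + |c - b| := abs_add_le _ _
        _ ≤ |a + b - c| + (|c| + |b|) := by linarith [abs_sub c b]
        _ = |a + b - c| + |b| + |c| := by ring
    have hmul := mul_le_mul_of_nonneg_left htri (hwnn i₀)
    rw [mul_add, mul_add] at hmul
    have hsig : σ (Fin.castLE hrm ⟨r - 1, by omega⟩) ≤ w i₀ * |Q i₀ j₀ * Lam₁d j₀ j₀| := by
      rw [abs_mul, ← mul_assoc, hQattain, one_mul]
      exact hLamabs j₀
    have hfinal1 : σ (Fin.castLE hrm ⟨r - 1, by omega⟩) - (2*(r:ℝ)*κ₀)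
        - (ε₀ + (1 + 2*(r:ℝ)*μ₀)*τ₀ + (r:ℝ)^2*μ₀*κ₀)
        ≤ w i₀ * |(Q * L₁d - L₂d * Q) i₀ j₀| := by linarith
    have hnum : σ (Fin.castLE hrm ⟨r - 1, by omega⟩) - 4*(r:ℝ)*μ₀*(τ₀ + (r:ℝ)*κ₀) - ε₀
        ≤ σ (Fin.castLE hrm ⟨r - 1, by omega⟩) - (2*(r:ℝ)*κ₀)
          - (ε₀ + (1 + 2*(r:ℝ)*μ₀)*τ₀ + (r:ℝ)^2*μ₀*κ₀) := by
      have e1 : 0 ≤ τ₀ * (2*(r:ℝ)*μ₀ - 1) := mul_nonneg hτ0 (by nlinarith)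
      have e2 : 0 ≤ κ₀ * (3*(r:ℝ)^2*μ₀ - 2*(r:ℝ)) := mul_nonneg hκ0 (by nlinarith)
      nlinarith
    exact hnum.trans (hfinal1.trans (hwmax_ge _ i₀ j₀))
  · -- Part 2
    intro hgap
    have hsqμ : 1 ≤ Real.sqrt μ₀ := by
      rw [show (1:ℝ) = Real.sqrt 1 from Real.sqrt_one.symm]
      exact Real.sqrt_le_sqrt hμ1
    have hκr : 2*(r:ℝ)*κ₀ < σ (Fin.castLE hrm ⟨r - 1, by omega⟩) := by
      nlinarith [mul_nonneg (mul_nonneg hκ0 (le_of_lt hrpos)) (sub_nonneg.mpr hsqμ)]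
    apply isUnit_iff_ne_zero.mpr
    apply det_ne_zero_of_sum_row_lt_diag
    intro k
    have hdiag : σ (Fin.castLE hrm ⟨r - 1, by omega⟩) - κ₀ ≤ ‖L₁d k k‖ := by
      rw [hL₁d, Matrix.add_apply, Real.norm_eq_abs]
      have h1 := abs_add_le (Lam₁d k k + (Vdᵀ * Ed * Vd) k k) (-(Vdᵀ * Ed * Vd) k k)
      rw [add_neg_cancel_right, abs_neg] at h1
      have h2 := hE11 k k
      have h3 := hLamabs k
      linarith
    have hoff : ∑ j ∈ Finset.univ.erase k, ‖L₁d k j‖ ≤ (2*(r:ℝ) - 1) * κ₀ := by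
      have hcard : (Finset.univ.erase k).card = 2*r - 1 := by
        rw [Finset.card_erase_of_mem (Finset.mem_univ k), Finset.card_univ]
        simp [Fintype.card_sum]
        omega
      calc ∑ j ∈ Finset.univ.erase k, ‖L₁d k j‖
          ≤ ∑ _j ∈ Finset.univ.erase k, κ₀ := by
            apply Finset.sum_le_sum
            intro j hj
            have hkj : k ≠ j := (Finset.ne_of_mem_erase hj).symm
            rw [hL₁d, Matrix.add_apply, hLam₁d, Matrix.diagonal_apply_ne _ hkj, zero_add,
              Real.norm_eq_abs]
            exact hE11 k j
        _ = ((2*r - 1 : ℕ) : ℝ) * κ₀ := by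
            rw [Finset.sum_const, hcard, nsmul_eq_mul]
        _ = (2*(r:ℝ) - 1) * κ₀ := by
            congr 1
            have h1r : (1:ℕ) ≤ 2*r := by omega
            push_cast [Nat.cast_sub h1r]
            ring
    calc ∑ j ∈ Finset.univ.erase k, ‖L₁d k j‖ ≤ (2*(r:ℝ) - 1) * κ₀ := hoff
      _ < σ (Fin.castLE hrm ⟨r - 1, by omega⟩) - κ₀ := by
          have hexp : (2*(r:ℝ) - 1) * κ₀ = 2*(r:ℝ)*κ₀ - κ₀ := by ring
          rw [hexp]
          linarith
      _ ≤ ‖L₁d k k‖ := hdiag
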